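/- For μ₀ ≥ 0, β₀ ∈ (0, π/2), and x > 0, d/dx of ∫_{β₀}^{π/2} ∫₀^{x/cos β} (1/(2π))·exp(−(r² − 2μ₀ r sin β + μ₀²)/2)·r dr dβ equals (1/(2√(2π)))·e^{−x²/2}·(1 − erf((x tan β₀ − μ₀)/√2)). -/

import Mathlib

open MeasureTheory Real Set Metric

noncomputable def erf (t : ℝ) : ℝ :=
  (2 / Real.sqrt Real.pi) * ∫ s in (0:ℝ)..t, Real.exp (-s ^ 2)

noncomputable def gI (μ₀ β r : ℝ) : ℝ :=
  (1 / (2 * Real.pi)) * Real.exp (-(r ^ 2 - 2 * μ₀ * r * Real.sin β + μ₀ ^ 2) / 2) * r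

noncomputable def FI (μ₀ t β : ℝ) : ℝ := ∫ r in (0:ℝ)..(t / Real.cos β), gI μ₀ β r

noncomputable def FI' (μ₀ t β : ℝ) : ℝ := gI μ₀ β (t / Real.cos β) * (1 / Real.cos β)

noncomputable def gbd (μ₀ r : ℝ) : ℝ :=
  (1 / (2 * Real.pi)) * Real.exp (-((r - μ₀) ^ 2) / 2) * r

lemma gI_cont (μ₀ : ℝ) : Continuous fun p : ℝ × ℝ => gI μ₀ p.1 p.2 := by
  unfold gI; fun_prop

lemma gI_contβ (μ₀ β : ℝ) : Continuous (gI μ₀ β) := by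
  unfold gI; fun_prop

lemma gI_nonneg (μ₀ β r : ℝ) (hr : 0 ≤ r) : 0 ≤ gI μ₀ β r := by
  unfold gI
  have := Real.exp_pos (-(r ^ 2 - 2 * μ₀ * r * Real.sin β + μ₀ ^ 2) / 2)
  have := Real.pi_pos
  positivity

lemma gI_le_gbd (μ₀ β r : ℝ) (hμ : 0 ≤ μ₀) (hr : 0 ≤ r) : gI μ₀ β r ≤ gbd μ₀ r := by
  unfold gI gbd
  have hs := Real.sin_le_one β
  have hπ := Real.pi_pos
  have hexp : Real.exp (-(r ^ 2 - 2 * μ₀ * r * Real.sin β + μ₀ ^ 2) / 2)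
      ≤ Real.exp (-((r - μ₀) ^ 2) / 2) := by
    apply Real.exp_le_exp.2
    nlinarith [mul_nonneg hμ hr]
  have h2π : (0:ℝ) < 1 / (2 * π) := by positivity
  exact mul_le_mul_of_nonneg_right (mul_le_mul_of_nonneg_left hexp h2π.le) hr

lemma gbd_cont (μ₀ : ℝ) : Continuous (gbd μ₀) := by unfold gbd; fun_prop

lemma gbd_int (μ₀ : ℝ) : Integrable (gbd μ₀) := by
  have h1 : Integrable (fun y : ℝ => (y + μ₀) * Real.exp (-(1/2 : ℝ) * y ^ 2)) := by
    have ha := integrable_mul_exp_neg_mul_sq (b := (1/2:ℝ)) (by norm_num)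
    have hb := (integrable_exp_neg_mul_sq (b := (1/2:ℝ)) (by norm_num)).const_mul μ₀
    exact (ha.add hb).congr (Filter.Eventually.of_forall fun y => by simp only [Pi.add_apply]; ring)
  have h2 : Integrable (fun r : ℝ => r * Real.exp (-((r - μ₀) ^ 2) / 2)) := by
    have heq : (fun r : ℝ => r * Real.exp (-((r - μ₀) ^ 2) / 2))
        = fun r : ℝ => ((r - μ₀) + μ₀) * Real.exp (-(1/2 : ℝ) * (r - μ₀) ^ 2) := by
      funext r; ring_nf
    rw [heq]
    exact h1.comp_sub_right μ₀
  have heq : gbd μ₀ = fun r => (1 / (2 * π)) * (r * Real.exp (-((r - μ₀) ^ 2) / 2)) := by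
    funext r; unfold gbd; ring
  rw [heq]
  exact h2.const_mul _

lemma FI_le (μ₀ t β : ℝ) (hμ : 0 ≤ μ₀) (ht : 0 ≤ t) (hc : 0 < Real.cos β) :
    FI μ₀ t β ≤ ∫ r in Set.Ioi (0:ℝ), gbd μ₀ r := by
  have hy : 0 ≤ t / Real.cos β := div_nonneg ht hc.le
  have h1 : FI μ₀ t β ≤ ∫ r in (0:ℝ)..(t / Real.cos β), gbd μ₀ r := by
    apply intervalIntegral.integral_mono_on hy
      ((gI_contβ μ₀ β).intervalIntegrable _ _) ((gbd_cont μ₀).intervalIntegrable _ _)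
    intro r hr
    exact gI_le_gbd μ₀ β r hμ hr.1
  have h2 : ∫ r in (0:ℝ)..(t / Real.cos β), gbd μ₀ r ≤ ∫ r in Set.Ioi (0:ℝ), gbd μ₀ r := by
    rw [intervalIntegral.integral_of_le hy]
    apply setIntegral_mono_set (gbd_int μ₀).integrableOn
    · filter_upwards [ae_restrict_mem measurableSet_Ioi] with r hr
      exact (gI_nonneg μ₀ 0 r hr.le).trans (gI_le_gbd μ₀ 0 r hμ hr.le)
    · exact Set.Ioc_subset_Ioi_self.eventuallyLE
  linarith

lemma FI_nonneg (μ₀ t β : ℝ) (ht : 0 ≤ t) (hc : 0 < Real.cos β) : 0 ≤ FI μ₀ t β := by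
  apply intervalIntegral.integral_nonneg (div_nonneg ht hc.le)
  intro r hr
  exact gI_nonneg μ₀ β r hr.1

lemma FI_contOn (μ₀ t β₀ : ℝ) (h0 : 0 < β₀) (h1 : β₀ < π / 2) :
    ContinuousOn (FI μ₀ t) (Set.Ioo β₀ (π / 2)) := by
  have hcos : ∀ β ∈ Set.Ioo β₀ (π / 2), (0:ℝ) < Real.cos β := fun β hb =>
    Real.cos_pos_of_mem_Ioo ⟨by linarith [hb.1], hb.2⟩
  have hfu : Continuous (Function.uncurry fun (p : ℝ × ℝ) (r : ℝ) => gI μ₀ p.1 r) := by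
    unfold Function.uncurry gI; fun_prop
  have hGc : Continuous fun p : ℝ × ℝ => ∫ r in (0:ℝ)..p.2, gI μ₀ p.1 r :=
    intervalIntegral.continuous_parametric_intervalIntegral_of_continuous hfu continuous_snd
  have h2 : ContinuousOn (fun β => ((β, t / Real.cos β) : ℝ × ℝ)) (Set.Ioo β₀ (π / 2)) := by
    apply ContinuousOn.prodMk continuousOn_id
    exact ContinuousOn.div continuousOn_const Real.continuous_cos.continuousOn
      (fun β hb => (hcos β hb).ne')
  apply (hGc.comp_continuousOn h2).congr
  intro β hb
  simp only [FI, Function.comp_apply]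

lemma FI'_contOn (μ₀ t β₀ : ℝ) (h0 : 0 < β₀) (h1 : β₀ < π / 2) :
    ContinuousOn (FI' μ₀ t) (Set.Ioo β₀ (π / 2)) := by
  have hcos : ∀ β ∈ Set.Ioo β₀ (π / 2), (0:ℝ) < Real.cos β := fun β hb =>
    Real.cos_pos_of_mem_Ioo ⟨by linarith [hb.1], hb.2⟩
  have h2 : ContinuousOn (fun β => ((β, t / Real.cos β) : ℝ × ℝ)) (Set.Ioo β₀ (π / 2)) := by
    apply ContinuousOn.prodMk continuousOn_id
    exact ContinuousOn.div continuousOn_const Real.continuous_cos.continuousOn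
      (fun β hb => (hcos β hb).ne')
  have h3 : ContinuousOn (fun β => gI μ₀ β (t / Real.cos β) * (1 / Real.cos β))
      (Set.Ioo β₀ (π / 2)) := by
    apply ContinuousOn.mul
    · apply ((gI_cont μ₀).comp_continuousOn h2).congr
      intro β hb; rfl
    · exact ContinuousOn.div continuousOn_const Real.continuous_cos.continuousOn
        (fun β hb => (hcos β hb).ne')
  apply h3.congr
  intro β hb
  simp only [FI']

lemma FI_hasDeriv (μ₀ t β : ℝ) (hc : Real.cos β ≠ 0) :
    HasDerivAt (fun t => FI μ₀ t β) (FI' μ₀ t β) t := by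
  have h1 : HasDerivAt (fun y => ∫ r in (0:ℝ)..y, gI μ₀ β r) (gI μ₀ β (t / Real.cos β))
      (t / Real.cos β) :=
    intervalIntegral.integral_hasDerivAt_right ((gI_contβ μ₀ β).intervalIntegrable _ _)
      ((gI_contβ μ₀ β).stronglyMeasurableAtFilter _ _) (gI_contβ μ₀ β).continuousAt
  have h2 : HasDerivAt (fun t : ℝ => t / Real.cos β) (1 / Real.cos β) t := by
    simpa using (hasDerivAt_id t).div_const (Real.cos β)
  exact h1.comp t h2

noncomputable def bnd (μ₀ x β : ℝ) : ℝ :=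
  (1 / (2 * Real.pi)) * ((3 * x / 2) * ((1 + Real.tan β ^ 2) *
    Real.exp (-(x ^ 2 / 8) * Real.tan β ^ 2 + 3 * x * μ₀ / 2 * Real.tan β)))

lemma FI'_le_bnd (μ₀ x t β : ℝ) (hμ : 0 ≤ μ₀) (hx : 0 < x)
    (hc : 0 < Real.cos β) (hτ : 0 < Real.tan β)
    (ht1 : x / 2 < t) (ht2 : t < 3 * x / 2) : ‖FI' μ₀ t β‖ ≤ bnd μ₀ x β := by
  have ht0 : 0 < t := lt_trans (by linarith) ht1
  have htc : 1 + Real.tan β ^ 2 = 1 / Real.cos β ^ 2 := by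
    rw [one_div, ← Real.inv_one_add_tan_sq hc.ne', inv_inv]
  have htan : Real.tan β = Real.sin β / Real.cos β := Real.tan_eq_sin_div_cos β
  have hF'nn : 0 ≤ FI' μ₀ t β :=
    mul_nonneg (gI_nonneg μ₀ β _ (div_nonneg ht0.le hc.le)) (by positivity)
  rw [Real.norm_eq_abs, abs_of_nonneg hF'nn]
  have e1 : (t / Real.cos β) ^ 2 = t ^ 2 * (1 + Real.tan β ^ 2) := by
    rw [htc, div_pow]; field_simp
  have e2 : (t / Real.cos β) * Real.sin β = t * Real.tan β := by
    rw [htan]; field_simp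
  have hEB : -((t / Real.cos β) ^ 2 - 2 * μ₀ * (t / Real.cos β) * Real.sin β + μ₀ ^ 2) / 2
      ≤ -(x ^ 2 / 8) * Real.tan β ^ 2 + 3 * x * μ₀ / 2 * Real.tan β := by
    rw [e1, show 2 * μ₀ * (t / Real.cos β) * Real.sin β
        = 2 * μ₀ * (t * Real.tan β) by rw [mul_assoc, e2]]
    nlinarith [sq_nonneg (t * Real.tan β - μ₀), sq_nonneg (Real.tan β),
      mul_nonneg (mul_nonneg hμ hτ.le) (by linarith : (0:ℝ) ≤ 3 * x / 2 - t),
      mul_nonneg (sq_nonneg (Real.tan β))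
        (mul_nonneg (by linarith : (0:ℝ) ≤ t - x / 2) (by linarith : (0:ℝ) ≤ t + x / 2))]
  have hval : FI' μ₀ t β = (1 / (2 * Real.pi)) * (t * ((1 + Real.tan β ^ 2) *
      Real.exp (-((t / Real.cos β) ^ 2 - 2 * μ₀ * (t / Real.cos β) * Real.sin β + μ₀ ^ 2) / 2))) := by
    simp only [FI', gI]
    rw [htc]
    have : (t / Real.cos β) * (1 / Real.cos β) = t * (1 / Real.cos β ^ 2) := by
      rw [div_mul_div_comm, mul_one, mul_one_div, sq]
    calc (1 / (2 * Real.pi)) *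
          Real.exp (-((t / Real.cos β) ^ 2 - 2 * μ₀ * (t / Real.cos β) * Real.sin β + μ₀ ^ 2) / 2) *
          (t / Real.cos β) * (1 / Real.cos β)
        = (1 / (2 * Real.pi)) *
          Real.exp (-((t / Real.cos β) ^ 2 - 2 * μ₀ * (t / Real.cos β) * Real.sin β + μ₀ ^ 2) / 2) *
          ((t / Real.cos β) * (1 / Real.cos β)) := by ring
      _ = _ := by rw [this]; ring
  rw [hval]
  unfold bnd
  have hπ := Real.pi_pos
  have h1τ : (0:ℝ) < 1 + Real.tan β ^ 2 := by positivity
  gcongr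

lemma bnd_intOn (μ₀ x β₀ : ℝ) (hμ : 0 ≤ μ₀) (hx : 0 < x) (h0 : 0 < β₀) (h1 : β₀ < π / 2) :
    IntegrableOn (bnd μ₀ x) (Set.Ioo β₀ (π / 2)) := by
  have hcos : ∀ β ∈ Set.Ioo β₀ (π / 2), (0:ℝ) < Real.cos β := fun β hb =>
    Real.cos_pos_of_mem_Ioo ⟨by linarith [hb.1], hb.2⟩
  have hπ := Real.pi_pos
  set ψ : ℝ → ℝ := fun τ => (1 / (2 * Real.pi)) * ((3 * x / 2) *
    Real.exp (-(x ^ 2 / 8) * τ ^ 2 + 3 * x * μ₀ / 2 * τ)) with hψdef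
  have ha : (0:ℝ) < x ^ 2 / 8 := by positivity
  have hψ_int : Integrable ψ := by
    set d : ℝ := (3 * x * μ₀ / 2) / (2 * (x ^ 2 / 8)) with hd
    have h1' := (integrable_exp_neg_mul_sq ha).comp_sub_right d
    have h2' := (h1'.const_mul (Real.exp ((x ^ 2 / 8) * d ^ 2))).const_mul
      ((1 / (2 * Real.pi)) * (3 * x / 2))
    refine h2'.congr (Filter.EventuallyEq.of_eq (funext fun τ => ?_))
    have hexp : Real.exp ((x ^ 2 / 8) * d ^ 2) * Real.exp (-(x ^ 2 / 8) * (τ - d) ^ 2)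
        = Real.exp (-(x ^ 2 / 8) * τ ^ 2 + 3 * x * μ₀ / 2 * τ) := by
      rw [← Real.exp_add]
      congr 1
      have hb : 2 * (x ^ 2 / 8) * d = 3 * x * μ₀ / 2 := by
        rw [hd]; field_simp
      linear_combination τ * hb
    calc (1 / (2 * Real.pi)) * (3 * x / 2) *
          (Real.exp ((x ^ 2 / 8) * d ^ 2) * Real.exp (-(x ^ 2 / 8) * (τ - d) ^ 2))
        = (1 / (2 * Real.pi)) * ((3 * x / 2) *
          (Real.exp ((x ^ 2 / 8) * d ^ 2) * Real.exp (-(x ^ 2 / 8) * (τ - d) ^ 2))) := by ring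
      _ = ψ τ := by rw [hexp]
  have htanderiv : ∀ β ∈ Set.Ioo β₀ (π / 2),
      HasDerivWithinAt Real.tan (1 / Real.cos β ^ 2) (Set.Ioo β₀ (π / 2)) β := fun β hb =>
    (Real.hasDerivAt_tan (hcos β hb).ne').hasDerivWithinAt
  have htaninj : Set.InjOn Real.tan (Set.Ioo β₀ (π / 2)) :=
    Real.injOn_tan.mono (fun β hb => Set.mem_Ioo.mpr
      ⟨by linarith [(Set.mem_Ioo.mp hb).1, hπ], (Set.mem_Ioo.mp hb).2⟩)
  have hkey := (integrableOn_image_iff_integrableOn_abs_deriv_smul measurableSet_Ioo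
    htanderiv htaninj ψ).1 (hψ_int.integrableOn)
  refine hkey.congr_fun (fun β hb => ?_) measurableSet_Ioo
  have hc := hcos β hb
  have htc : 1 + Real.tan β ^ 2 = 1 / Real.cos β ^ 2 := by
    rw [one_div, ← Real.inv_one_add_tan_sq hc.ne', inv_inv]
  beta_reduce
  rw [smul_eq_mul, abs_of_pos (by positivity : (0:ℝ) < 1 / Real.cos β ^ 2)]
  unfold bnd
  rw [htc, hψdef]
  ring

private lemma gauss_int : Integrable (fun w : ℝ => Real.exp (-w ^ 2)) := by
  simpa using integrable_exp_neg_mul_sq (one_pos)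

private lemma gauss_tail (c : ℝ) :
    ∫ w in Set.Ioi c, Real.exp (-w ^ 2)
      = Real.sqrt π / 2 - ∫ w in (0:ℝ)..c, Real.exp (-w ^ 2) := by
  have hint := gauss_int
  have h1 : ∫ w in Set.Ioi (0:ℝ), Real.exp (-w ^ 2) = Real.sqrt π / 2 := by
    simpa using integral_gaussian_Ioi 1
  have h2 := intervalIntegral.integral_Iic_add_Ioi (b := c) hint.integrableOn hint.integrableOn
  have h3 := intervalIntegral.integral_Iic_add_Ioi (b := (0:ℝ)) hint.integrableOn hint.integrableOn
  have h4 := intervalIntegral.integral_Iic_sub_Iic (a := (0:ℝ)) (b := c)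
    hint.integrableOn hint.integrableOn
  linarith

private lemma tan_image {β₀ : ℝ} (h0 : 0 < β₀) (h1 : β₀ < π / 2) :
    Real.tan '' Set.Ioo β₀ (π / 2) = Set.Ioi (Real.tan β₀) := by
  ext y
  constructor
  · rintro ⟨β, hβm, rfl⟩
    exact Real.tan_lt_tan_of_nonneg_of_lt_pi_div_two h0.le hβm.2 hβm.1
  · intro hy
    refine ⟨Real.arctan y, ⟨?_, Real.arctan_lt_pi_div_two y⟩, Real.tan_arctan y⟩
    have h2 : Real.arctan (Real.tan β₀) < Real.arctan y := Real.arctan_strictMono hy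
    rwa [Real.arctan_tan (by linarith) h1] at h2

private lemma affine_image (a b c : ℝ) (hb : 0 < b) :
    (fun w => a + b * w) '' Set.Ioi c = Set.Ioi (a + b * c) := by
  ext y
  constructor
  · rintro ⟨w, hw, rfl⟩
    have : c < w := hw
    simp only [Set.mem_Ioi]
    nlinarith
  · intro hy
    refine ⟨(y - a) / b, ?_, by field_simp; ring⟩
    simp only [Set.mem_Ioi] at hy ⊢
    rw [lt_div_iff₀ hb]
    nlinarith

lemma final_value (μ₀ β₀ x : ℝ) (hμ : 0 ≤ μ₀) (h0 : 0 < β₀) (h1 : β₀ < π / 2) (hx : 0 < x) :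
    ∫ β in β₀..(π / 2), FI' μ₀ x β
      = (1 / (2 * Real.sqrt (2 * Real.pi))) * Real.exp (-x ^ 2 / 2)
        * (1 - (2 / Real.sqrt Real.pi) *
            ∫ s in (0:ℝ)..((x * Real.tan β₀ - μ₀) / Real.sqrt 2), Real.exp (-s ^ 2)) := by
  have hπ := Real.pi_pos
  have hcos : ∀ β ∈ Set.Ioo β₀ (π / 2), (0:ℝ) < Real.cos β := fun β hb =>
    Real.cos_pos_of_mem_Ioo ⟨by linarith [hb.1], hb.2⟩
  have htaninj : Set.InjOn Real.tan (Set.Ioo β₀ (π / 2)) :=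
    Real.injOn_tan.mono (fun β hb => Set.mem_Ioo.mpr
      ⟨by linarith [(Set.mem_Ioo.mp hb).1, hπ], (Set.mem_Ioo.mp hb).2⟩)
  set G : ℝ → ℝ := fun s => (1 / (2 * Real.pi)) * Real.exp (-(x ^ 2 + (s - μ₀) ^ 2) / 2)
    with hGdef
  set c₀ : ℝ := (x * Real.tan β₀ - μ₀) / Real.sqrt 2 with hc₀def
  -- step a: to set integral over Ioo
  have ha : ∫ β in β₀..(π / 2), FI' μ₀ x β = ∫ β in Set.Ioo β₀ (π / 2), FI' μ₀ x β := by
    rw [intervalIntegral.integral_of_le h1.le,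
      ← Measure.restrict_congr_set Ioo_ae_eq_Ioc]
  -- step b: pointwise to substitution form
  have hb : ∫ β in Set.Ioo β₀ (π / 2), FI' μ₀ x β
      = ∫ β in Set.Ioo β₀ (π / 2), |x * (1 / Real.cos β ^ 2)| • G (x * Real.tan β) := by
    apply setIntegral_congr_fun measurableSet_Ioo
    intro β hmem
    have hc := hcos β hmem
    have htc : 1 + Real.tan β ^ 2 = 1 / Real.cos β ^ 2 := by
      rw [one_div, ← Real.inv_one_add_tan_sq hc.ne', inv_inv]
    have e1 : (x / Real.cos β) ^ 2 = x ^ 2 * (1 + Real.tan β ^ 2) := by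
      rw [htc, div_pow]; field_simp
    have e2 : (x / Real.cos β) * Real.sin β = x * Real.tan β := by
      rw [Real.tan_eq_sin_div_cos]; field_simp
    have hAB : -((x / Real.cos β) ^ 2 - 2 * μ₀ * (x / Real.cos β) * Real.sin β + μ₀ ^ 2) / 2
        = -(x ^ 2 + (x * Real.tan β - μ₀) ^ 2) / 2 := by
      rw [e1, mul_assoc (2 * μ₀), e2]
      ring
    have e3 : (x / Real.cos β) * (1 / Real.cos β) = x * (1 / Real.cos β ^ 2) := by
      rw [div_mul_div_comm, mul_one, mul_one_div, sq]
    simp only [FI', gI, hGdef, smul_eq_mul]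
    rw [hAB, abs_of_pos (by positivity : (0:ℝ) < x * (1 / Real.cos β ^ 2)), ← e3]
    ring
  -- step c: tan substitution
  have hderiv2 : ∀ β ∈ Set.Ioo β₀ (π / 2),
      HasDerivWithinAt (fun β => x * Real.tan β) (x * (1 / Real.cos β ^ 2))
        (Set.Ioo β₀ (π / 2)) β := fun β hmem =>
    ((Real.hasDerivAt_tan (hcos β hmem).ne').const_mul x).hasDerivWithinAt
  have hinj2 : Set.InjOn (fun β => x * Real.tan β) (Set.Ioo β₀ (π / 2)) :=
    fun β1 m1 β2 m2 he => htaninj m1 m2 (mul_left_cancel₀ hx.ne' he)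
  have himg : (fun β => x * Real.tan β) '' Set.Ioo β₀ (π / 2) = Set.Ioi (x * Real.tan β₀) := by
    ext y
    constructor
    · rintro ⟨β, hmem, rfl⟩
      have := Real.tan_lt_tan_of_nonneg_of_lt_pi_div_two h0.le hmem.2 hmem.1
      refine Set.mem_Ioi.mpr ?_
      show x * Real.tan β₀ < x * Real.tan β
      nlinarith
    · intro hy
      have hy' : Real.tan β₀ < y / x := by
        rw [lt_div_iff₀ hx]; nlinarith [Set.mem_Ioi.mp hy]
      have : y / x ∈ Real.tan '' Set.Ioo β₀ (π / 2) := by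
        rw [tan_image h0 h1]; exact hy'
      obtain ⟨β, hmem, hβ⟩ := this
      refine ⟨β, hmem, ?_⟩
      show x * Real.tan β = y
      rw [hβ]; field_simp
  have hc' : ∫ β in Set.Ioo β₀ (π / 2), |x * (1 / Real.cos β ^ 2)| • G (x * Real.tan β)
      = ∫ s in Set.Ioi (x * Real.tan β₀), G s := by
    rw [← himg, integral_image_eq_integral_abs_deriv_smul measurableSet_Ioo hderiv2 hinj2 G]
  -- step d: affine substitution
  have hs2 : (0:ℝ) < Real.sqrt 2 := Real.sqrt_pos.mpr (by norm_num)
  have haff : μ₀ + Real.sqrt 2 * c₀ = x * Real.tan β₀ := by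
    rw [hc₀def]; field_simp; ring
  have hderiv3 : ∀ w ∈ Set.Ioi c₀,
      HasDerivWithinAt (fun w => μ₀ + Real.sqrt 2 * w) (Real.sqrt 2) (Set.Ioi c₀) w := by
    intro w _
    have : HasDerivAt (fun w => μ₀ + Real.sqrt 2 * w) (Real.sqrt 2) w := by
      simpa using ((hasDerivAt_id w).const_mul (Real.sqrt 2)).const_add μ₀
    exact this.hasDerivWithinAt
  have hinj3 : Set.InjOn (fun w => μ₀ + Real.sqrt 2 * w) (Set.Ioi c₀) := by
    intro w1 _ w2 _ he
    simp only at he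
    exact mul_left_cancel₀ hs2.ne' (by linarith)
  have himg3 : (fun w => μ₀ + Real.sqrt 2 * w) '' Set.Ioi c₀ = Set.Ioi (x * Real.tan β₀) := by
    rw [affine_image μ₀ (Real.sqrt 2) c₀ hs2, haff]
  have hd' : ∫ s in Set.Ioi (x * Real.tan β₀), G s
      = ∫ w in Set.Ioi c₀, (Real.sqrt 2 * ((1 / (2 * Real.pi)) * Real.exp (-x ^ 2 / 2)))
          * Real.exp (-w ^ 2) := by
    rw [← himg3, integral_image_eq_integral_abs_deriv_smul measurableSet_Ioi hderiv3 hinj3 G]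
    apply setIntegral_congr_fun measurableSet_Ioi
    intro w _
    have hsq : (μ₀ + Real.sqrt 2 * w - μ₀) ^ 2 = 2 * w ^ 2 := by
      have h2 : Real.sqrt 2 * Real.sqrt 2 = 2 := Real.mul_self_sqrt (by norm_num)
      ring_nf
      nlinarith [h2]
    simp only [hGdef, smul_eq_mul, abs_of_pos hs2]
    rw [hsq, show -(x ^ 2 + 2 * w ^ 2) / 2 = -x ^ 2 / 2 + -w ^ 2 by ring, Real.exp_add]
    ring
  -- step e: gaussian tail and algebra
  rw [ha, hb, hc', hd', MeasureTheory.integral_const_mul, gauss_tail]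
  have hsπ : (0:ℝ) < Real.sqrt π := Real.sqrt_pos.mpr hπ
  have h2 : Real.sqrt 2 * Real.sqrt 2 = 2 := Real.mul_self_sqrt (by norm_num)
  have hππ : Real.sqrt π * Real.sqrt π = π := Real.mul_self_sqrt hπ.le
  rw [Real.sqrt_mul (by norm_num : (0:ℝ) ≤ 2) π]
  field_simp
  ring_nf
  have e2 : Real.sqrt 2 ^ 2 = 2 := Real.sq_sqrt (by norm_num)
  have ep : Real.sqrt π ^ 2 = π := Real.sq_sqrt hπ.le
  have e3 : Real.sqrt π ^ 3 = π * Real.sqrt π := by rw [pow_succ, ep]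
  simp only [e2, ep, e3]
  ring


theorem stmt_11 (μ₀ β₀ x : ℝ) (hμ : 0 ≤ μ₀) (hβ : β₀ ∈ Set.Ioo 0 (Real.pi / 2))
    (hx : 0 < x) :
    HasDerivAt (fun t : ℝ =>
        ∫ β in β₀..(Real.pi / 2),
          ∫ r in (0:ℝ)..(t / Real.cos β),
            (1 / (2 * Real.pi)) * Real.exp (-(r ^ 2 - 2 * μ₀ * r * Real.sin β + μ₀ ^ 2) / 2) * r)
      ((1 / (2 * Real.sqrt (2 * Real.pi))) * Real.exp (-x ^ 2 / 2)
        * (1 - erf ((x * Real.tan β₀ - μ₀) / Real.sqrt 2))) x := by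
  obtain ⟨hβ0, hβ1⟩ := hβ
  have hπ := Real.pi_pos
  have hIoc : Set.uIoc β₀ (π / 2) = Set.Ioc β₀ (π / 2) := uIoc_of_le hβ1.le
  have hres : volume.restrict (Set.Ioo β₀ (π / 2)) = volume.restrict (Set.Ioc β₀ (π / 2)) :=
    Measure.restrict_congr_set Ioo_ae_eq_Ioc
  have hcos : ∀ β ∈ Set.Ioo β₀ (π / 2), (0:ℝ) < Real.cos β := fun β hb =>
    Real.cos_pos_of_mem_Ioo ⟨by linarith [hb.1], hb.2⟩
  have htanpos : ∀ β ∈ Set.Ioo β₀ (π / 2), (0:ℝ) < Real.tan β := by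
    intro β hb
    rw [Real.tan_eq_sin_div_cos]
    exact div_pos (Real.sin_pos_of_pos_of_lt_pi (by linarith [hb.1])
      (by linarith [hb.2, hπ])) (hcos β hb)
  have haeIoo : ∀ᵐ β : ℝ, β ∈ Set.uIoc β₀ (π / 2) → β ∈ Set.Ioo β₀ (π / 2) := by
    have hne : ∀ᵐ β : ℝ, β ≠ π / 2 := by
      have h0 : volume ({π / 2} : Set ℝ) = 0 := measure_singleton _
      rw [ae_iff]
      convert h0 using 2
      ext β; simp
    filter_upwards [hne] with β hβne hmem
    rw [hIoc] at hmem
    exact ⟨hmem.1, lt_of_le_of_ne hmem.2 hβne⟩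
  have hFmeas : ∀ t : ℝ, AEStronglyMeasurable (FI μ₀ t) (volume.restrict (Set.uIoc β₀ (π / 2))) := by
    intro t
    rw [hIoc, ← hres]
    exact (FI_contOn μ₀ t β₀ hβ0 hβ1).aestronglyMeasurable measurableSet_Ioo
  have hF'meas : AEStronglyMeasurable (FI' μ₀ x) (volume.restrict (Set.uIoc β₀ (π / 2))) := by
    rw [hIoc, ← hres]
    exact (FI'_contOn μ₀ x β₀ hβ0 hβ1).aestronglyMeasurable measurableSet_Ioo
  have hF_int : IntervalIntegrable (FI μ₀ x) volume β₀ (π / 2) := by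
    rw [intervalIntegrable_iff, hIoc]
    refine IntegrableOn.congr_set_ae ?_ Ioo_ae_eq_Ioc.symm
    refine Integrable.mono' (g := fun _ : ℝ => ∫ r in Set.Ioi (0:ℝ), gbd μ₀ r)
      (integrableOn_const measure_Ioo_lt_top.ne)
      ((FI_contOn μ₀ x β₀ hβ0 hβ1).aestronglyMeasurable measurableSet_Ioo) ?_
    filter_upwards [ae_restrict_mem measurableSet_Ioo] with β hb
    rw [Real.norm_eq_abs, abs_of_nonneg (FI_nonneg μ₀ x β hx.le (hcos β hb))]
    exact FI_le μ₀ x β hμ hx.le (hcos β hb)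
  have h_bound : ∀ᵐ β : ℝ, β ∈ Set.uIoc β₀ (π / 2) →
      ∀ t ∈ ball x (x / 2), ‖FI' μ₀ t β‖ ≤ bnd μ₀ x β := by
    filter_upwards [haeIoo] with β hmem' hmem t ht
    have hb := hmem' hmem
    rw [mem_ball, Real.dist_eq] at ht
    obtain ⟨ht1', ht2'⟩ := abs_lt.1 ht
    exact FI'_le_bnd μ₀ x t β hμ hx (hcos β hb) (htanpos β hb) (by linarith) (by linarith)
  have hbnd_int : IntervalIntegrable (bnd μ₀ x) volume β₀ (π / 2) := by
    rw [intervalIntegrable_iff, hIoc]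
    exact (bnd_intOn μ₀ x β₀ hμ hx hβ0 hβ1).congr_set_ae Ioo_ae_eq_Ioc.symm
  have h_diff : ∀ᵐ β : ℝ, β ∈ Set.uIoc β₀ (π / 2) →
      ∀ t ∈ ball x (x / 2), HasDerivAt (fun t => FI μ₀ t β) (FI' μ₀ t β) t := by
    filter_upwards [haeIoo] with β hmem' hmem t _
    exact FI_hasDeriv μ₀ t β (hcos β (hmem' hmem)).ne'
  have key := (intervalIntegral.hasDerivAt_integral_of_dominated_loc_of_deriv_le
    (F := fun t β => FI μ₀ t β) (F' := fun t β => FI' μ₀ t β) (bound := bnd μ₀ x)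
    (ball_mem_nhds x (half_pos hx)) (Filter.Eventually.of_forall hFmeas) hF_int hF'meas h_bound hbnd_int h_diff).2
  rw [final_value μ₀ β₀ x hμ hβ0 hβ1 hx] at key
  exact key
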